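/- Let Λ be a unimodular lattice in ℝ² and let r = (r₁, r₂), s = (s₁, s₂) be a pair of consecutive minimal vectors in Λ with 0 ≤ r₂ < s₂, such that if r₂ = 0 then r₁s₁ ≤ 0, and with s₁ ≠ 0. Then r₁ ≠ 0 and x = −s₁/r₁ > 0; set y = r₂/s₂, n = ⌊1/x⌋ and w = r + n·s = (w₁, w₂). Then (s, w) is a pair of consecutive minimal vectors of Λ with 0 ≤ s₂ < w₂, the sign of s₁ is opposite to the sign of r₁, and −w₁/s₁ = {1/x} (the fractional part of 1/x) while s₂/w₂ = 1/(⌊1/x⌋ + y). -/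

import Mathlib

open Matrix
noncomputable section
set_option maxHeartbeats 1000000

/-- `SL₂(ℝ)`. -/
abbrev SL2R := Matrix.SpecialLinearGroup (Fin 2) ℝ

/-- The set of points of the unimodular lattice `g ℤ²` in `ℝ²`. -/
def latticePts (g : SL2R) : Set (Fin 2 → ℝ) :=
  {v | ∃ m : Fin 2 → ℤ, v = (g : Matrix (Fin 2) (Fin 2) ℝ).mulVec (fun i => (m i : ℝ))}

/-- `r` is a minimal vector of the lattice `Λ`: it is a nonzero lattice point, and any
nonzero lattice point `s` with `|s₁| ≤ |r₁|` and `|s₂| ≤ |r₂|` satisfies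
`|s₁| = |r₁|` and `|s₂| = |r₂|`. -/
def IsMinimalVector (Λ : Set (Fin 2 → ℝ)) (r : Fin 2 → ℝ) : Prop :=
  r ∈ Λ ∧ r ≠ 0 ∧ ∀ s ∈ Λ, s ≠ 0 → |s 0| ≤ |r 0| → |s 1| ≤ |r 1| →
    |s 0| = |r 0| ∧ |s 1| = |r 1|

/-- `(r, s)` is a pair of consecutive minimal vectors of `Λ`. -/
def ConsecutiveMinimalVectors (Λ : Set (Fin 2 → ℝ)) (r s : Fin 2 → ℝ) : Prop :=
  IsMinimalVector Λ r ∧ IsMinimalVector Λ s ∧ |r 1| < |s 1| ∧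
    ¬∃ w : Fin 2 → ℝ, IsMinimalVector Λ w ∧ |r 1| < |w 1| ∧ |w 1| < |s 1|

lemma lat_comb (g : SL2R) {v w : Fin 2 → ℝ} (hv : v ∈ latticePts g) (hw : w ∈ latticePts g)
    (a b : ℤ) : (a:ℝ) • v + (b:ℝ) • w ∈ latticePts g := by
  obtain ⟨m, rfl⟩ := hv; obtain ⟨k, rfl⟩ := hw
  refine ⟨a • m + b • k, ?_⟩
  have hcast : (fun i => (((a • m + b • k) i : ℤ) : ℝ))
      = (a:ℝ) • (fun i => (m i : ℝ)) + (b:ℝ) • (fun i => (k i : ℝ)) := by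
    funext i
    simp only [Pi.add_apply, Pi.smul_apply, smul_eq_mul]
    push_cast
    ring
  rw [hcast, Matrix.mulVec_add, Matrix.mulVec_smul, Matrix.mulVec_smul]

lemma exists_minimal_le (g : SL2R) {t : Fin 2 → ℝ} (ht : t ∈ latticePts g) (ht0 : t ≠ 0) :
    ∃ v, IsMinimalVector (latticePts g) v ∧ |v 0| ≤ |t 0| ∧ |v 1| ≤ |t 1| := by
  set A : Matrix (Fin 2) (Fin 2) ℝ := (g : Matrix (Fin 2) (Fin 2) ℝ) with hA
  have hdet : IsUnit A.det := by rw [hA, g.2]; exact isUnit_one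
  have hrec : ∀ u : Fin 2 → ℝ, A⁻¹.mulVec (A.mulVec u) = u := by
    intro u; rw [Matrix.mulVec_mulVec, Matrix.nonsing_inv_mul A hdet, Matrix.one_mulVec]
  set K : Fin 2 → ℝ := fun i => |A⁻¹ i 0| * |t 0| + |A⁻¹ i 1| * |t 1| with hK
  set S : Set (Fin 2 → ℤ) := {m | A.mulVec (fun i => (m i : ℝ)) ≠ 0 ∧
      |A.mulVec (fun i => (m i : ℝ)) 0| ≤ |t 0| ∧ |A.mulVec (fun i => (m i : ℝ)) 1| ≤ |t 1|}
    with hS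
  have hbound : ∀ m ∈ S, ∀ i, |m i| ≤ ⌈K i⌉ := by
    intro m hm i
    obtain ⟨hne, h0, h1⟩ := hm
    set u : Fin 2 → ℝ := fun i => (m i : ℝ) with hu
    have hui : (m i : ℝ) = A⁻¹ i 0 * (A.mulVec u 0) + A⁻¹ i 1 * (A.mulVec u 1) := by
      conv_lhs => rw [show (m i : ℝ) = u i from rfl, ← hrec u]
      simp [Matrix.mulVec, dotProduct, Fin.sum_univ_two]
    have habs : |(m i : ℝ)| ≤ K i := by
      rw [hui]
      have h3 := abs_add_le (A⁻¹ i 0 * (A.mulVec u 0)) (A⁻¹ i 1 * (A.mulVec u 1))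
      rw [abs_mul, abs_mul] at h3
      have b0 : |A⁻¹ i 0| * |A.mulVec u 0| ≤ |A⁻¹ i 0| * |t 0| :=
        mul_le_mul_of_nonneg_left h0 (abs_nonneg _)
      have b1 : |A⁻¹ i 1| * |A.mulVec u 1| ≤ |A⁻¹ i 1| * |t 1| :=
        mul_le_mul_of_nonneg_left h1 (abs_nonneg _)
      calc |A⁻¹ i 0 * A.mulVec u 0 + A⁻¹ i 1 * A.mulVec u 1|
          ≤ |A⁻¹ i 0| * |A.mulVec u 0| + |A⁻¹ i 1| * |A.mulVec u 1| := h3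
        _ ≤ K i := by rw [hK]; exact add_le_add b0 b1
    have : (|m i| : ℝ) ≤ (⌈K i⌉ : ℝ) := by
      exact habs.trans (Int.le_ceil _)
    exact_mod_cast this
  have hfin : S.Finite := by
    apply Set.Finite.subset (Set.Finite.pi (fun i => Set.finite_Icc (-⌈K i⌉) ⌈K i⌉))
    intro m hm
    rw [Set.mem_pi]
    intro i _
    rw [Set.mem_Icc]
    exact abs_le.mp (hbound m hm i)
  obtain ⟨mt, hmt⟩ := ht
  have hmtS : mt ∈ S := by
    rw [hS]
    refine ⟨?_, ?_, ?_⟩ <;> rw [← hmt]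
    exact ht0
  have hne : hfin.toFinset.Nonempty := ⟨mt, hfin.mem_toFinset.mpr hmtS⟩
  obtain ⟨m₀, hm₀mem, hm₀min⟩ := Finset.exists_min_image hfin.toFinset
    (fun m => toLex (|A.mulVec (fun i => (m i : ℝ)) 1|, |A.mulVec (fun i => (m i : ℝ)) 0|)) hne
  set v : Fin 2 → ℝ := A.mulVec (fun i => (m₀ i : ℝ)) with hv
  have hm₀S : m₀ ∈ S := hfin.mem_toFinset.mp hm₀mem
  obtain ⟨hv0, hvb0, hvb1⟩ := hm₀S
  refine ⟨v, ⟨⟨m₀, rfl⟩, hv0, ?_⟩, hvb0, hvb1⟩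
  intro u hu hu0 hub0 hub1
  obtain ⟨mu, hmu⟩ := hu
  have hmuS : mu ∈ S := by
    rw [hS]
    refine ⟨?_, ?_, ?_⟩ <;> rw [← hmu]
    · exact hu0
    · exact hub0.trans hvb0
    · exact hub1.trans hvb1
  have := hm₀min mu (hfin.mem_toFinset.mpr hmuS)
  rw [Prod.Lex.le_iff] at this
  simp only [hA, ← hmu] at this
  rcases this with h' | ⟨h1', h2'⟩
  · exact absurd hub1 (not_le.mpr h')
  · exact ⟨le_antisymm hub0 h2', h1'.symm⟩
-- helper: abs of sum of opposite-sign reals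

lemma abs_add_opp {a b : ℝ} (hab : a * b < 0) (hba : |b| < |a|) : |a + b| = |a| - |b| := by
  rcases lt_trichotomy a 0 with ha | ha | ha
  · have hb : 0 < b := by nlinarith
    rw [abs_of_neg ha, abs_of_pos hb] at *
    rw [abs_of_neg (by linarith)]
    ring
  · rw [ha] at hab; simp at hab
  · have hb : b < 0 := by nlinarith
    rw [abs_of_pos ha, abs_of_neg hb] at *
    rw [abs_of_pos (by linarith)]
    ring

/-- Let `(r, s)` be consecutive minimal vectors of a unimodular lattice with
`0 ≤ r₂ < s₂`, with `r₁s₁ ≤ 0` whenever `r₂ = 0`, and with `s₁ ≠ 0`. Then `r₁ ≠ 0`,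
`x = −s₁/r₁ > 0`, and with `y = r₂/s₂`, `n = ⌊1/x⌋` and `w = r + n·s`: the pair
`(s, w)` is a pair of consecutive minimal vectors with `0 ≤ s₂ < w₂`, the sign of `s₁`
is opposite to that of `r₁`, `−w₁/s₁ = {1/x}`, and `s₂/w₂ = 1/(⌊1/x⌋ + y)`. -/
theorem stmt15 (g : SL2R) (r s : Fin 2 → ℝ)
    (h : ConsecutiveMinimalVectors (latticePts g) r s)
    (h1 : 0 ≤ r 1) (h2 : r 1 < s 1) (h3 : r 1 = 0 → r 0 * s 0 ≤ 0) (hs0 : s 0 ≠ 0) :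
    r 0 ≠ 0 ∧ 0 < -(s 0) / r 0 ∧
      ∀ (x y : ℝ) (n : ℤ) (w : Fin 2 → ℝ),
        x = -(s 0) / r 0 → y = r 1 / s 1 → n = ⌊x⁻¹⌋ → w = r + (n : ℝ) • s →
          ConsecutiveMinimalVectors (latticePts g) s w ∧
            0 ≤ s 1 ∧ s 1 < w 1 ∧ s 0 * r 0 < 0 ∧
            -(w 0) / s 0 = Int.fract x⁻¹ ∧ s 1 / w 1 = ((⌊x⁻¹⌋ : ℝ) + y)⁻¹ := by
  obtain ⟨hr, hs, hlt, hnb⟩ := h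
  have hs1 : 0 < s 1 := lt_of_le_of_lt h1 h2
  have habs_r1 : |r 1| = r 1 := abs_of_nonneg h1
  have habs_s1 : |s 1| = s 1 := abs_of_pos hs1
  -- |s 0| < |r 0|
  have hs0r0 : |s 0| < |r 0| := by
    by_contra hc
    push_neg at hc
    have := hs.2.2 r hr.1 hr.2.1 hc (le_of_lt hlt)
    exact absurd this.2 (ne_of_lt hlt)
  have hr0 : r 0 ≠ 0 := by
    intro hz
    rw [hz, abs_zero] at hs0r0
    exact absurd hs0r0 (not_lt.mpr (abs_nonneg _))
  have hs0abs : 0 < |s 0| := abs_pos.mpr hs0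
  have hr0abs : 0 < |r 0| := abs_pos.mpr hr0
  -- box empty
  have boxEmpty : ∀ t ∈ latticePts g, t ≠ 0 → |t 0| < |r 0| → |t 1| < s 1 → False := by
    intro t ht ht0 hb0 hb1
    obtain ⟨v, hv, hv0, hv1⟩ := exists_minimal_le g ht ht0
    have hv1' : |v 1| ≤ |r 1| := by
      by_contra hc
      push_neg at hc
      exact hnb ⟨v, hv, hc, by rw [habs_s1]; exact lt_of_le_of_lt hv1 hb1⟩
    have := hr.2.2 v hv.1 hv.2.1 (le_of_lt (lt_of_le_of_lt hv0 hb0)) hv1'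
    exact absurd this.1 (ne_of_lt (lt_of_le_of_lt hv0 hb0))
  -- sign
  have hsign : r 0 * s 0 < 0 := by
    rcases eq_or_lt_of_le h1 with hz | hpos
    · have := h3 hz.symm
      rcases lt_or_eq_of_le this with h' | h'
      · exact h'
      · exact absurd h' (mul_ne_zero hr0 hs0)
    · by_contra hc
      push_neg at hc
      have hcpos : 0 < r 0 * s 0 := lt_of_le_of_ne hc (Ne.symm (mul_ne_zero hr0 hs0))
      -- t = s - r
      have ht : s - r ∈ latticePts g := by
        have := lat_comb g hs.1 hr.1 1 (-1)
        push_cast at this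
        simpa [sub_eq_add_neg, one_smul, neg_one_smul] using this
      have ht1 : (s - r) 1 = s 1 - r 1 := rfl
      have ht0' : (s - r) ≠ 0 := by
        intro hz'
        have : (s - r) 1 = 0 := by rw [hz']; rfl
        rw [ht1] at this
        linarith
      have habs0 : |(s - r) 0| < |r 0| := by
        have he : (s - r) 0 = s 0 - r 0 := rfl
        have key : |s 0 - r 0| = |r 0| - |s 0| := by
          have h' := abs_add_opp (a := -(r 0)) (b := s 0) (by nlinarith) (by rwa [abs_neg])
          rw [abs_neg] at h'
          rw [show s 0 - r 0 = -(r 0) + s 0 from by ring]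
          exact h'
        rw [he, key]
        linarith
      have habs1 : |(s - r) 1| < s 1 := by
        rw [ht1, abs_of_pos (by linarith)]
        linarith
      exact boxEmpty _ ht ht0' habs0 habs1
  have hxpos : 0 < -(s 0) / r 0 := by
    rcases lt_trichotomy (r 0) 0 with h' | h' | h'
    · exact div_pos_of_neg_of_neg (by nlinarith) h'
    · exact absurd h' hr0
    · exact div_pos (by nlinarith) h'
  refine ⟨hr0, hxpos, ?_⟩
  intro x y n w hx hy hn hw
  have hx' : s 0 = -x * r 0 := by rw [hx]; field_simp
  have hx0 : 0 < x := hx ▸ hxpos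
  have hxabs : |s 0| = x * |r 0| := by rw [hx', abs_mul, abs_neg, abs_of_pos hx0]
  have hx1 : x < 1 := by
    have h' : x * |r 0| < 1 * |r 0| := by rw [one_mul, ← hxabs]; exact hs0r0
    exact lt_of_mul_lt_mul_right h' (abs_nonneg _)
  have hinv : 1 < x⁻¹ := by rw [← one_div, lt_div_iff₀ hx0]; linarith only [hx1]
  have hn1 : 1 ≤ n := by
    rw [hn]
    exact Int.le_floor.mpr (by exact_mod_cast hinv.le)
  have hn1R : (1:ℝ) ≤ (n:ℝ) := by exact_mod_cast hn1
  have hxinv : x⁻¹ * x = 1 := inv_mul_cancel₀ (ne_of_gt hx0)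
  have hnx : (n:ℝ) * x ≤ 1 := by
    have hfl := Int.floor_le x⁻¹
    rw [← hn] at hfl
    calc (n:ℝ) * x ≤ x⁻¹ * x := mul_le_mul_of_nonneg_right hfl hx0.le
      _ = 1 := hxinv
  have hnx1 : 1 < ((n:ℝ) + 1) * x := by
    have hfl := Int.lt_floor_add_one x⁻¹
    rw [← hn] at hfl
    calc (1:ℝ) = x⁻¹ * x := hxinv.symm
      _ < ((n:ℝ) + 1) * x := mul_lt_mul_of_pos_right hfl hx0
  -- if r 1 = 0 then 2 ≤ n
  have hn2 : r 1 = 0 → (2:ℤ) ≤ n := by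
    intro hz
    have ht : r + s ∈ latticePts g := by
      have := lat_comb g hr.1 hs.1 1 1
      push_cast at this
      simpa [one_smul] using this
    have ht0' : (r + s) 0 = r 0 + s 0 := rfl
    have ht1' : (r + s) 1 = s 1 := by
      show r 1 + s 1 = s 1
      rw [hz]; ring
    have habs0 : |(r + s) 0| = |r 0| - |s 0| := by
      rw [ht0']
      exact abs_add_opp hsign hs0r0
    have htne : (r + s) ≠ 0 := by
      intro hzz
      have hcz : (r + s) 0 = 0 := by rw [hzz]; rfl
      rw [hcz, abs_zero] at habs0
      linarith only [habs0, hs0abs, hs0r0]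
    have h2s : 2 * |s 0| ≤ |r 0| := by
      by_cases hcase : |(r + s) 0| ≤ |s 0|
      · have := hs.2.2 (r + s) ht htne hcase (by rw [ht1', habs_s1])
        rw [habs0] at this
        linarith only [this.1]
      · push_neg at hcase
        rw [habs0] at hcase
        linarith only [hcase]
    have hx2 : 2 * x ≤ 1 := by
      have h' : 2 * (x * |r 0|) ≤ 1 * |r 0| := by
        rw [one_mul, ← hxabs]; linarith only [h2s]
      have h'' : (2 * x) * |r 0| ≤ 1 * |r 0| := by linarith only [h']
      exact le_of_mul_le_mul_right (by linarith only [h'']) hr0abs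
    rw [hn]
    refine Int.le_floor.mpr ?_
    push_cast
    calc (2:ℝ) = 2 * x * x⁻¹ := by field_simp
      _ ≤ 1 * x⁻¹ := mul_le_mul_of_nonneg_right hx2 (inv_nonneg.mpr hx0.le)
      _ = x⁻¹ := one_mul _
  -- components of w
  have hw1 : w 1 = r 1 + (n:ℝ) * s 1 := by
    rw [hw]; simp [Pi.add_apply, Pi.smul_apply, smul_eq_mul]
  have hw0 : w 0 = r 0 + (n:ℝ) * s 0 := by
    rw [hw]; simp [Pi.add_apply, Pi.smul_apply, smul_eq_mul]
  have hw0x : w 0 = r 0 * (1 - (n:ℝ)*x) := by rw [hw0, hx']; ring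
  have h1nx0 : 0 ≤ 1 - (n:ℝ)*x := by linarith only [hnx]
  have h1nxx : 1 - (n:ℝ)*x < x := by linarith only [hnx1]
  have habs_w0 : |w 0| = |r 0| * (1 - (n:ℝ)*x) := by
    rw [hw0x, abs_mul, abs_of_nonneg h1nx0]
  have hw1gt : s 1 < w 1 := by
    rcases eq_or_lt_of_le h1 with hz | hp
    · have h2n : (2:ℝ) ≤ (n:ℝ) := by exact_mod_cast hn2 hz.symm
      have hp2 : 2 * s 1 ≤ (n:ℝ) * s 1 := mul_le_mul_of_nonneg_right h2n hs1.le
      rw [hw1, ← hz]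
      linarith only [hp2, hs1]
    · have hp1 : 1 * s 1 ≤ (n:ℝ) * s 1 := mul_le_mul_of_nonneg_right hn1R hs1.le
      rw [hw1]
      linarith only [hp1, hp]
  have hw1pos : 0 < w 1 := lt_trans hs1 hw1gt
  have habs_w1 : |w 1| = r 1 + (n:ℝ) * s 1 := by rw [← hw1]; exact abs_of_pos hw1pos
  have hrn : (0:ℝ) ≤ r 1 + (n:ℝ) * s 1 := by rw [← hw1]; exact hw1pos.le
  have hwmem : w ∈ latticePts g := by
    have := lat_comb g hr.1 hs.1 1 n
    push_cast at this
    rw [hw]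
    simpa [one_smul] using this
  -- component formula
  have happ : ∀ (a b : ℤ) (i : Fin 2), ((a:ℝ) • r + (b:ℝ) • s) i = (a:ℝ) * r i + (b:ℝ) * s i := by
    intro a b i
    simp [Pi.add_apply, Pi.smul_apply, smul_eq_mul]
  -- basis lemma
  have hbasis : ∀ t ∈ latticePts g, ∃ a b : ℤ, t = (a:ℝ) • r + (b:ℝ) • s := by
    intro t ht
    set d : ℝ := r 0 * s 1 - r 1 * s 0 with hd
    have hr0sq : 0 < r 0 * r 0 := mul_self_pos.mpr hr0
    have hdpos : 0 < r 0 * d := by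
      rw [hd]
      have p1 : 0 < (r 0 * r 0) * s 1 := mul_pos hr0sq hs1
      have p2 : 0 ≤ r 1 * (-(r 0 * s 0)) := mul_nonneg h1 (neg_nonneg.mpr hsign.le)
      nlinarith only [p1, p2]
    have hdne : d ≠ 0 := by
      intro hz
      rw [hz, mul_zero] at hdpos
      exact lt_irrefl 0 hdpos
    set α : ℝ := (t 0 * s 1 - t 1 * s 0) / d with hα
    set β : ℝ := (r 0 * t 1 - r 1 * t 0) / d with hβ
    have hta : t 0 = α * r 0 + β * s 0 := by
      rw [hα, hβ]; field_simp; rw [hd]; ring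
    have htb : t 1 = α * r 1 + β * s 1 := by
      rw [hα, hβ]; field_simp; rw [hd]; ring
    set a : ℤ := round α with ha
    set b : ℤ := round β with hb
    set t' : Fin 2 → ℝ := t - ((a:ℝ) • r + (b:ℝ) • s) with ht'
    have ht'mem : t' ∈ latticePts g := by
      have h2' := lat_comb g ht (lat_comb g hr.1 hs.1 a b) 1 (-1)
      push_cast at h2'
      have he : t' = (1:ℝ) • t + (-1:ℝ) • ((a:ℝ) • r + (b:ℝ) • s) := by
        rw [ht']
        funext i
        simp [Pi.add_apply, Pi.smul_apply, Pi.sub_apply]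
        ring
      rw [he]
      exact h2'
    have ht'0 : t' 0 = (α - a) * r 0 + (β - b) * s 0 := by
      rw [ht']
      show t 0 - ((a:ℝ) • r + (b:ℝ) • s) 0 = _
      rw [happ, hta]; ring
    have ht'1 : t' 1 = (α - a) * r 1 + (β - b) * s 1 := by
      rw [ht']
      show t 1 - ((a:ℝ) • r + (b:ℝ) • s) 1 = _
      rw [happ, htb]; ring
    have hra := abs_sub_round α
    have hrb := abs_sub_round β
    have hb0' : |t' 0| < |r 0| := by
      have hc : |t' 0| ≤ |α - a| * |r 0| + |β - b| * |s 0| := by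
        rw [ht'0]
        calc |(α - a) * r 0 + (β - b) * s 0| ≤ |(α - a) * r 0| + |(β - b) * s 0| := abs_add_le _ _
          _ = |α - a| * |r 0| + |β - b| * |s 0| := by rw [abs_mul, abs_mul]
      have p1 : |α - a| * |r 0| ≤ (1/2) * |r 0| := mul_le_mul_of_nonneg_right hra (abs_nonneg _)
      have p2 : |β - b| * |s 0| ≤ (1/2) * |s 0| := mul_le_mul_of_nonneg_right hrb (abs_nonneg _)
      linarith only [hc, p1, p2, hs0r0]
    have hb1' : |t' 1| < s 1 := by
      have hc : |t' 1| ≤ |α - a| * r 1 + |β - b| * s 1 := by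
        rw [ht'1]
        calc |(α - a) * r 1 + (β - b) * s 1| ≤ |(α - a) * r 1| + |(β - b) * s 1| := abs_add_le _ _
          _ = |α - a| * |r 1| + |β - b| * |s 1| := by rw [abs_mul, abs_mul]
          _ = |α - a| * r 1 + |β - b| * s 1 := by rw [habs_r1, habs_s1]
      have p1 : |α - a| * r 1 ≤ (1/2) * r 1 := mul_le_mul_of_nonneg_right hra h1
      have p2 : |β - b| * s 1 ≤ (1/2) * s 1 := mul_le_mul_of_nonneg_right hrb hs1.le
      linarith only [hc, p1, p2, h2]
    by_cases hz : t' = 0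
    · refine ⟨a, b, ?_⟩
      rw [ht'] at hz
      exact sub_eq_zero.mp hz
    · exact (boxEmpty t' ht'mem hz hb0' hb1').elim
  -- key arithmetic: minimality case
  have key_min : ∀ a b : ℤ, 1 ≤ a → |(a:ℝ) - (b:ℝ)*x| ≤ 1 - (n:ℝ)*x →
      |(a:ℝ)*r 1 + (b:ℝ)*s 1| ≤ r 1 + (n:ℝ)*s 1 → a = 1 ∧ b = n := by
    intro a b ha hb0' hb1'
    have haR : (1:ℝ) ≤ (a:ℝ) := by exact_mod_cast ha
    have habs := abs_le.mp hb0'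
    have hb1 : 1 ≤ b := by
      by_contra hc
      push_neg at hc
      have hbR : (b:ℝ) ≤ 0 := by exact_mod_cast (by omega : b ≤ 0)
      have p1 : 0 ≤ -(b:ℝ) * x := mul_nonneg (by linarith only [hbR]) hx0.le
      have p2 : 0 < (n:ℝ) * x := mul_pos (by linarith only [hn1R] : (0:ℝ) < (n:ℝ)) hx0
      linarith only [habs.2, haR, p1, p2]
    have hbR : (1:ℝ) ≤ (b:ℝ) := by exact_mod_cast hb1
    have hpos : 0 ≤ (a:ℝ)*r 1 + (b:ℝ)*s 1 := by
      have p1 : 0 ≤ (a:ℝ) * r 1 := mul_nonneg (by linarith only [haR]) h1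
      have p2 : 0 ≤ (b:ℝ) * s 1 := mul_nonneg (by linarith only [hbR]) hs1.le
      linarith only [p1, p2]
    rw [abs_of_nonneg hpos] at hb1'
    have hble : b ≤ n := by
      by_contra hc
      push_neg at hc
      have hcR : (n:ℝ) + 1 ≤ (b:ℝ) := by exact_mod_cast hc
      have p1 : 0 ≤ ((a:ℝ) - 1) * r 1 := mul_nonneg (by linarith only [haR]) h1
      have p2 : 0 ≤ ((b:ℝ) - ((n:ℝ) + 1)) * s 1 := mul_nonneg (by linarith only [hcR]) hs1.le
      nlinarith only [hb1', p1, p2, hs1]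
    have hbleR : (b:ℝ) ≤ (n:ℝ) := by exact_mod_cast hble
    have ha1 : a = 1 := by
      by_contra hc
      have h2R : (2:ℝ) ≤ (a:ℝ) := by exact_mod_cast (by omega : (2:ℤ) ≤ a)
      have p : 0 ≤ ((n:ℝ) - (b:ℝ)) * x := mul_nonneg (by linarith only [hbleR]) hx0.le
      nlinarith only [habs.2, p, h2R]
    have hnb : n ≤ b := by
      by_contra hc
      push_neg at hc
      have haa : (a:ℝ) = 1 := by exact_mod_cast ha1
      have p : 0 < ((n:ℝ) - (b:ℝ)) * x :=
        mul_pos (by exact_mod_cast Int.sub_pos.mpr hc) hx0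
      nlinarith only [habs.2, p, haa]
    exact ⟨ha1, le_antisymm hble hnb⟩
  -- key arithmetic: between case
  have key_bet : ∀ a b : ℤ, 1 ≤ a → |(a:ℝ) - (b:ℝ)*x| < x →
      |(a:ℝ)*r 1 + (b:ℝ)*s 1| < r 1 + (n:ℝ)*s 1 → False := by
    intro a b ha hb0' hb1'
    have haR : (1:ℝ) ≤ (a:ℝ) := by exact_mod_cast ha
    have habs := abs_lt.mp hb0'
    have hb1 : 1 ≤ b := by
      by_contra hc
      push_neg at hc
      have hbR : (b:ℝ) ≤ 0 := by exact_mod_cast (by omega : b ≤ 0)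
      have p1 : 0 ≤ -(b:ℝ) * x := mul_nonneg (by linarith only [hbR]) hx0.le
      linarith only [habs.2, haR, p1, hx1]
    have hbR : (1:ℝ) ≤ (b:ℝ) := by exact_mod_cast hb1
    have hpos : 0 ≤ (a:ℝ)*r 1 + (b:ℝ)*s 1 := by
      have p1 : 0 ≤ (a:ℝ) * r 1 := mul_nonneg (by linarith only [haR]) h1
      have p2 : 0 ≤ (b:ℝ) * s 1 := mul_nonneg (by linarith only [hbR]) hs1.le
      linarith only [p1, p2]
    rw [abs_of_nonneg hpos] at hb1'
    have hble : b + 1 ≤ n := by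
      by_contra hc
      push_neg at hc
      have hcR : (n:ℝ) ≤ (b:ℝ) := by exact_mod_cast (by omega : n ≤ b)
      have p1 : 0 ≤ ((a:ℝ) - 1) * r 1 := mul_nonneg (by linarith only [haR]) h1
      have p2 : 0 ≤ ((b:ℝ) - (n:ℝ)) * s 1 := mul_nonneg (by linarith only [hcR]) hs1.le
      nlinarith only [hb1', p1, p2]
    have hbleR : (b:ℝ) + 1 ≤ (n:ℝ) := by exact_mod_cast hble
    have p : ((b:ℝ) + 1) * x ≤ (n:ℝ) * x := mul_le_mul_of_nonneg_right hbleR hx0.le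
    nlinarith only [habs.2, p, hnx, haR]
  -- w is a minimal vector
  have hwne : w ≠ 0 := by
    intro hz
    have hz1 : w 1 = 0 := by rw [hz]; rfl
    rw [hz1] at hw1pos
    exact lt_irrefl 0 hw1pos
  have hwmin : IsMinimalVector (latticePts g) w := by
    refine ⟨hwmem, hwne, ?_⟩
    intro t ht ht0 htb0 htb1
    obtain ⟨a, b, hab⟩ := hbasis t ht
    have ht0c : t 0 = r 0 * ((a:ℝ) - (b:ℝ)*x) := by
      rw [hab, happ, hx']; ring
    have ht1c : t 1 = (a:ℝ)*r 1 + (b:ℝ)*s 1 := by rw [hab, happ]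
    have habne : ¬(a = 0 ∧ b = 0) := by
      rintro ⟨rfl, rfl⟩
      apply ht0
      rw [hab]
      funext i
      simp
    have hb0' : |(a:ℝ) - (b:ℝ)*x| ≤ 1 - (n:ℝ)*x := by
      rw [ht0c, abs_mul, habs_w0] at htb0
      exact (mul_le_mul_iff_right₀ hr0abs).mp htb0
    have hb1' : |(a:ℝ)*r 1 + (b:ℝ)*s 1| ≤ r 1 + (n:ℝ)*s 1 := by
      rw [ht1c, habs_w1] at htb1
      exact htb1
    rcases lt_trichotomy a 0 with hac | hac | hac
    · have hkey := key_min (-a) (-b) (by omega) ?_ ?_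
      · obtain ⟨ha', hb'⟩ := hkey
        have haR : (a:ℝ) = -1 := by exact_mod_cast (by omega : a = -1)
        have hbR : (b:ℝ) = -(n:ℝ) := by
          have : b = -n := by omega
          rw [this]; push_cast; ring
        constructor
        · rw [ht0c, haR, hbR, habs_w0, abs_mul,
            show (-1:ℝ) - (-(n:ℝ))*x = -(1 - (n:ℝ)*x) from by ring, abs_neg,
            abs_of_nonneg h1nx0]
        · rw [ht1c, haR, hbR, habs_w1,
            show (-1:ℝ)*r 1 + (-(n:ℝ))*s 1 = -(r 1 + (n:ℝ)*s 1) from by ring, abs_neg,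
            abs_of_nonneg hrn]
      · push_cast
        rw [show -(a:ℝ) - (-(b:ℝ))*x = -((a:ℝ) - (b:ℝ)*x) from by ring, abs_neg]
        exact hb0'
      · push_cast
        rw [show -(a:ℝ)*r 1 + (-(b:ℝ))*s 1 = -((a:ℝ)*r 1 + (b:ℝ)*s 1) from by ring, abs_neg]
        exact hb1'
    · -- a = 0
      exfalso
      have hbne : b ≠ 0 := fun hzz => habne ⟨hac, hzz⟩
      have hbabs : (1:ℝ) ≤ |(b:ℝ)| := by
        have := Int.one_le_abs hbne
        exact_mod_cast this
      rw [hac] at hb0'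
      push_cast at hb0'
      rw [show (0:ℝ) - (b:ℝ)*x = -((b:ℝ)*x) from by ring, abs_neg, abs_mul,
        abs_of_pos hx0] at hb0'
      have p : 1 * x ≤ |(b:ℝ)| * x := mul_le_mul_of_nonneg_right hbabs hx0.le
      linarith only [hb0', p, h1nxx]
    · obtain ⟨ha', hb'⟩ := key_min a b (by omega) hb0' hb1'
      have haR : (a:ℝ) = 1 := by exact_mod_cast ha'
      have hbR : (b:ℝ) = (n:ℝ) := by exact_mod_cast hb'
      constructor
      · rw [ht0c, haR, hbR, habs_w0, abs_mul, abs_of_nonneg h1nx0]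
      · rw [ht1c, haR, hbR, habs_w1,
          show (1:ℝ)*r 1 + (n:ℝ)*s 1 = r 1 + (n:ℝ)*s 1 from by ring,
          abs_of_nonneg hrn]
  -- nothing between s and w
  have hbet : ¬∃ v : Fin 2 → ℝ, IsMinimalVector (latticePts g) v ∧ |s 1| < |v 1| ∧ |v 1| < |w 1| := by
    rintro ⟨v, hv, hv1, hv2⟩
    have hv0 : |v 0| < |s 0| := by
      by_contra hc
      push_neg at hc
      have := hv.2.2 s hs.1 hs.2.1 hc (le_of_lt hv1)
      exact absurd this.2 (ne_of_lt hv1)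
    obtain ⟨a, b, hab⟩ := hbasis v hv.1
    have ht0c : v 0 = r 0 * ((a:ℝ) - (b:ℝ)*x) := by
      rw [hab, happ, hx']; ring
    have ht1c : v 1 = (a:ℝ)*r 1 + (b:ℝ)*s 1 := by rw [hab, happ]
    have hb0' : |(a:ℝ) - (b:ℝ)*x| < x := by
      rw [ht0c, abs_mul, hxabs, mul_comm x |r 0|] at hv0
      exact (mul_lt_mul_iff_right₀ hr0abs).mp hv0
    have hb1' : |(a:ℝ)*r 1 + (b:ℝ)*s 1| < r 1 + (n:ℝ)*s 1 := by
      rw [ht1c, habs_w1] at hv2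
      exact hv2
    rcases lt_trichotomy a 0 with hac | hac | hac
    · refine key_bet (-a) (-b) (by omega) ?_ ?_
      · push_cast
        rw [show -(a:ℝ) - (-(b:ℝ))*x = -((a:ℝ) - (b:ℝ)*x) from by ring, abs_neg]
        exact hb0'
      · push_cast
        rw [show -(a:ℝ)*r 1 + (-(b:ℝ))*s 1 = -((a:ℝ)*r 1 + (b:ℝ)*s 1) from by ring, abs_neg]
        exact hb1'
    · -- a = 0 ⇒ b = 0 ⇒ v = 0
      have hbz : b = 0 := by
        by_contra hbne
        have hbabs : (1:ℝ) ≤ |(b:ℝ)| := by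
          have := Int.one_le_abs hbne
          exact_mod_cast this
        rw [hac] at hb0'
        push_cast at hb0'
        rw [show (0:ℝ) - (b:ℝ)*x = -((b:ℝ)*x) from by ring, abs_neg, abs_mul,
          abs_of_pos hx0] at hb0'
        have p : 1 * x ≤ |(b:ℝ)| * x := mul_le_mul_of_nonneg_right hbabs hx0.le
        linarith only [hb0', p]
      apply hv.2.1
      rw [hab, hac, hbz]
      funext i
      simp
    · exact key_bet a b (by omega) hb0' hb1'
  refine ⟨⟨hs, hwmin, ?_, hbet⟩, le_of_lt hs1, hw1gt, by rw [mul_comm]; exact hsign, ?_, ?_⟩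
  · rw [habs_s1, habs_w1, ← hw1]
    exact hw1gt
  · -- -(w 0)/s 0 = Int.fract x⁻¹
    have hfr : Int.fract x⁻¹ = x⁻¹ - (n:ℝ) := by
      rw [Int.fract, hn]
    rw [hfr, hw0x, hx']
    field_simp
  · -- s 1 / w 1 = (⌊x⁻¹⌋ + y)⁻¹
    have hkey : ((⌊x⁻¹⌋:ℤ):ℝ) + y = w 1 / s 1 := by
      rw [← hn, hy, hw1]
      field_simp
      ring
    rw [hkey, inv_div]
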